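/- Second-order consistency of the Gaussian nonlocal operator for quadratic polynomials: if u(x) = c + bᵀx + ½ xᵀ M x is a quadratic polynomial with symmetric matrix M, then L_δ u(x) = ∫_{ℝ^d} (u(y) − u(x)) γ(x,y) dy = Σ_{i,j} a^{i,j}(x) M_{ij} = tr(A(x) M) exactly, for every δ > 0. -/

import Mathlib

open MeasureTheory Matrix

/-- The `d`-dimensional Gaussian density with mean `0` and covariance matrix `S`. -/
noncomputable def gaussDensity {d : ℕ} (S : Matrix (Fin d) (Fin d) ℝ) (z : Fin d → ℝ) : ℝ :=
  (Real.sqrt ((2 * Real.pi) ^ d * S.det))⁻¹ *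
    Real.exp (-(1 / 2) * (z ⬝ᵥ S⁻¹.mulVec z))

/-- The nonlocal kernel `γ(x,y) = (2/δ²) p(y - x; 0, δ² A(x))`. -/
noncomputable def gaussKernel {d : ℕ} (A : (Fin d → ℝ) → Matrix (Fin d) (Fin d) ℝ)
    (δ : ℝ) (x y : Fin d → ℝ) : ℝ :=
  (2 / δ ^ 2) * gaussDensity (δ ^ 2 • A x) (y - x)

namespace GaussAux

open Real

noncomputable def phi (t : ℝ) : ℝ := (Real.sqrt (2 * Real.pi))⁻¹ * Real.exp (-(1/2) * t ^ 2)

lemma sqrt2pi_pos : 0 < Real.sqrt (2 * Real.pi) :=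
  Real.sqrt_pos.2 (by positivity)

lemma integrable_g : Integrable fun t : ℝ => Real.exp (-(1/2 : ℝ) * t ^ 2) :=
  integrable_exp_neg_mul_sq (by norm_num)

lemma integral_g : ∫ t : ℝ, Real.exp (-(1/2 : ℝ) * t ^ 2) = Real.sqrt (2 * Real.pi) := by
  rw [integral_gaussian]
  norm_num; ring

lemma integrable_tg : Integrable fun t : ℝ => t * Real.exp (-(1/2 : ℝ) * t ^ 2) :=
  integrable_mul_exp_neg_mul_sq (by norm_num)

lemma integrable_t2g : Integrable fun t : ℝ => t ^ 2 * Real.exp (-(1/2 : ℝ) * t ^ 2) := by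
  have h := integrable_rpow_mul_exp_neg_mul_sq (b := 1/2) (by norm_num) (s := 2) (by norm_num)
  have : ∀ t : ℝ, t ^ (2:ℝ) = t ^ (2:ℕ) := fun t => by
    rw [show ((2:ℝ) = ((2:ℕ):ℝ)) by norm_num, Real.rpow_natCast]
  simpa [this] using h

lemma integral_tg : ∫ t : ℝ, t * Real.exp (-(1/2 : ℝ) * t ^ 2) = 0 := by
  have h := integral_neg_eq_self (fun t : ℝ => t * Real.exp (-(1/2 : ℝ) * t ^ 2)) volume
  have h2 : ∫ x : ℝ, -(x * Real.exp (-(1/2 : ℝ) * x ^ 2)) = ∫ x : ℝ, x * Real.exp (-(1/2 : ℝ) * x ^ 2) := by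
    rw [← h]; congr 1; funext x; rw [neg_sq]; ring
  rw [integral_neg] at h2
  linarith

lemma integral_t2g : ∫ t : ℝ, t ^ 2 * Real.exp (-(1/2 : ℝ) * t ^ 2) = Real.sqrt (2 * Real.pi) := by
  have hderiv : ∀ t : ℝ, HasDerivAt (fun t : ℝ => -(t * Real.exp (-(1/2 : ℝ) * t ^ 2)))
      (t ^ 2 * Real.exp (-(1/2 : ℝ) * t ^ 2) - Real.exp (-(1/2 : ℝ) * t ^ 2)) t := by
    intro t
    have hexp : HasDerivAt (fun t : ℝ => Real.exp (-(1/2 : ℝ) * t ^ 2))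
        (Real.exp (-(1/2 : ℝ) * t ^ 2) * (-(1/2 : ℝ) * (2 * t ^ 1))) t :=
      ((hasDerivAt_pow 2 t).const_mul (-(1/2 : ℝ))).exp
    have := ((hasDerivAt_id t).mul hexp).neg
    refine this.congr_deriv ?_
    simp only [id]
    ring
  have h0 := integral_eq_zero_of_hasDerivAt_of_integrable hderiv
    (integrable_t2g.sub integrable_g) integrable_tg.neg
  rw [integral_sub integrable_t2g integrable_g, integral_g] at h0
  linarith

lemma integrable_phi : Integrable phi := integrable_g.const_mul _

lemma integral_phi : ∫ t : ℝ, phi t = 1 := by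
  unfold phi
  rw [integral_const_mul, integral_g, inv_mul_cancel₀ sqrt2pi_pos.ne']

lemma integrable_tphi : Integrable fun t : ℝ => t * phi t := by
  have : (fun t : ℝ => t * phi t)
      = fun t => (Real.sqrt (2 * Real.pi))⁻¹ * (t * Real.exp (-(1/2 : ℝ) * t ^ 2)) := by
    funext t; unfold phi; ring
  rw [this]; exact integrable_tg.const_mul _

lemma integral_tphi : ∫ t : ℝ, t * phi t = 0 := by
  have : (fun t : ℝ => t * phi t)
      = fun t => (Real.sqrt (2 * Real.pi))⁻¹ * (t * Real.exp (-(1/2 : ℝ) * t ^ 2)) := by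
    funext t; unfold phi; ring
  rw [this, integral_const_mul, integral_tg, mul_zero]

lemma integrable_t2phi : Integrable fun t : ℝ => t * (t * phi t) := by
  have : (fun t : ℝ => t * (t * phi t))
      = fun t => (Real.sqrt (2 * Real.pi))⁻¹ * (t ^ 2 * Real.exp (-(1/2 : ℝ) * t ^ 2)) := by
    funext t; unfold phi; ring
  rw [this]; exact integrable_t2g.const_mul _

lemma integral_t2phi : ∫ t : ℝ, t * (t * phi t) = 1 := by
  have : (fun t : ℝ => t * (t * phi t))
      = fun t => (Real.sqrt (2 * Real.pi))⁻¹ * (t ^ 2 * Real.exp (-(1/2 : ℝ) * t ^ 2)) := by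
    funext t; unfold phi; ring
  rw [this, integral_const_mul, integral_t2g, inv_mul_cancel₀ sqrt2pi_pos.ne']


variable {d : ℕ}

/-- factor functions for monomial moments -/
noncomputable def fac2 (i j k : Fin d) : ℝ → ℝ :=
  fun t => (if k = i then t else 1) * ((if k = j then t else 1) * phi t)

noncomputable def fac1 (i k : Fin d) : ℝ → ℝ :=
  fun t => (if k = i then t else 1) * phi t

lemma prod_phi_eq2 (i j : Fin d) (w : Fin d → ℝ) :
    w i * w j * ∏ k, phi (w k) = ∏ k, fac2 i j k (w k) := by
  unfold fac2
  simp only [Finset.prod_mul_distrib, Finset.prod_ite_eq', Finset.mem_univ, if_pos]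
  ring

lemma prod_phi_eq1 (i : Fin d) (w : Fin d → ℝ) :
    w i * ∏ k, phi (w k) = ∏ k, fac1 i k (w k) := by
  unfold fac1
  simp only [Finset.prod_mul_distrib, Finset.prod_ite_eq', Finset.mem_univ, if_pos]

lemma integrable_fac2 (i j k : Fin d) : Integrable (fac2 i j k) := by
  unfold fac2
  by_cases hi : k = i <;> by_cases hj : k = j
  · simp only [if_pos hi, if_pos hj]; exact integrable_t2phi
  · simp only [if_pos hi, if_neg hj, one_mul]; exact integrable_tphi
  · simp only [if_neg hi, if_pos hj, one_mul]; exact integrable_tphi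
  · simp only [if_neg hi, if_neg hj, one_mul]; exact integrable_phi

lemma integrable_fac1 (i k : Fin d) : Integrable (fac1 i k) := by
  unfold fac1
  by_cases hi : k = i
  · simp only [if_pos hi]; exact integrable_tphi
  · simp only [if_neg hi, one_mul]; exact integrable_phi

lemma integrable_mon2 (i j : Fin d) :
    Integrable (fun w : Fin d → ℝ => w i * w j * ∏ k, phi (w k)) := by
  have heq : (fun w : Fin d → ℝ => w i * w j * ∏ k, phi (w k))
      = fun w => ∏ k, fac2 i j k (w k) := funext (prod_phi_eq2 i j)
  rw [heq]
  exact Integrable.fintype_prod (𝕜 := ℝ) fun k => integrable_fac2 i j k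

lemma integrable_mon1 (i : Fin d) :
    Integrable (fun w : Fin d → ℝ => w i * ∏ k, phi (w k)) := by
  have heq : (fun w : Fin d → ℝ => w i * ∏ k, phi (w k))
      = fun w => ∏ k, fac1 i k (w k) := funext (prod_phi_eq1 i)
  rw [heq]
  exact Integrable.fintype_prod (𝕜 := ℝ) fun k => integrable_fac1 i k

lemma integral_mon2 (i j : Fin d) :
    ∫ w : Fin d → ℝ, w i * w j * ∏ k, phi (w k) = if i = j then 1 else 0 := by
  have heq : (fun w : Fin d → ℝ => w i * w j * ∏ k, phi (w k))
      = fun w => ∏ k, fac2 i j k (w k) := funext (prod_phi_eq2 i j)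
  rw [heq, integral_fintype_prod_volume_eq_prod (fac2 i j)]
  by_cases h : i = j
  · subst h
    rw [if_pos rfl]
    refine Finset.prod_eq_one fun k _ => ?_
    unfold fac2
    by_cases hi : k = i
    · simp only [if_pos hi]; exact integral_t2phi
    · simp only [if_neg hi, one_mul]; exact integral_phi
  · rw [if_neg h]
    refine Finset.prod_eq_zero (Finset.mem_univ i) ?_
    unfold fac2
    rw [show (∫ t, (if i = i then t else 1) * ((if i = j then t else 1) * phi t))
        = ∫ t, t * phi t by congr 1; funext t; rw [if_pos rfl, if_neg h, one_mul]]
    exact integral_tphi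

lemma integral_mon1 (i : Fin d) :
    ∫ w : Fin d → ℝ, w i * ∏ k, phi (w k) = 0 := by
  have heq : (fun w : Fin d → ℝ => w i * ∏ k, phi (w k))
      = fun w => ∏ k, fac1 i k (w k) := funext (prod_phi_eq1 i)
  rw [heq, integral_fintype_prod_volume_eq_prod (fac1 i)]
  refine Finset.prod_eq_zero (Finset.mem_univ i) ?_
  unfold fac1
  rw [show (∫ t, (if i = i then t else 1) * phi t) = ∫ t, t * phi t by
    congr 1; funext t; rw [if_pos rfl]]
  exact integral_tphi

lemma integral_linear_quadratic (c : Fin d → ℝ) (B : Matrix (Fin d) (Fin d) ℝ) :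
    ∫ w : Fin d → ℝ, (c ⬝ᵥ w + (1/2) * (w ⬝ᵥ B.mulVec w)) * ∏ k, phi (w k)
      = (1/2) * B.trace := by
  have heq : (fun w : Fin d → ℝ => (c ⬝ᵥ w + (1/2) * (w ⬝ᵥ B.mulVec w)) * ∏ k, phi (w k))
      = fun w => (∑ i, c i * (w i * ∏ k, phi (w k)))
          + ∑ i, ∑ j, (1/2 * B i j) * (w i * w j * ∏ k, phi (w k)) := by
    funext w
    simp only [dotProduct, mulVec, add_mul, Finset.sum_mul, Finset.mul_sum]
    congr 1
    · exact Finset.sum_congr rfl fun i _ => by ring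
    · exact Finset.sum_congr rfl fun i _ => Finset.sum_congr rfl fun j _ => by ring
  rw [heq, integral_add
      (integrable_finset_sum _ fun i _ => (integrable_mon1 i).const_mul _)
      (integrable_finset_sum _ fun i _ => integrable_finset_sum _ fun j _ =>
        (integrable_mon2 i j).const_mul _),
    integral_finset_sum _ fun i _ => (integrable_mon1 i).const_mul _,
    integral_finset_sum _ fun i _ => integrable_finset_sum _ fun j _ =>
        (integrable_mon2 i j).const_mul _]
  simp only [integral_const_mul, integral_mon1, integral_mon2, mul_zero, Finset.sum_const_zero,
    zero_add, mul_ite, mul_one]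
  rw [Matrix.trace, Finset.mul_sum]
  refine Finset.sum_congr rfl fun i _ => ?_
  rw [integral_finset_sum _ fun j _ => (integrable_mon2 i j).const_mul _]
  simp only [integral_const_mul, integral_mon2, mul_ite, mul_one, mul_zero]
  rw [Finset.sum_ite_eq Finset.univ i (fun j => 1/2 * B i j)]
  simp [Matrix.diag]

/-- transpose-dot helper -/
lemma mulVec_dot (A : Matrix (Fin d) (Fin d) ℝ) (x y : Fin d → ℝ) :
    (A.mulVec x) ⬝ᵥ y = x ⬝ᵥ (Aᵀ.mulVec y) := by
  rw [dotProduct_mulVec, vecMul_transpose, dotProduct_comm]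

lemma continuous_quadform (B : Matrix (Fin d) (Fin d) ℝ) :
    Continuous fun z : Fin d → ℝ => z ⬝ᵥ B.mulVec z := by
  unfold dotProduct mulVec
  refine continuous_finset_sum _ fun i _ => (continuous_apply i).mul ?_
  exact continuous_finset_sum _ fun j _ => continuous_const.mul (continuous_apply j)

lemma continuous_dot (v : Fin d → ℝ) : Continuous fun z : Fin d → ℝ => v ⬝ᵥ z := by
  unfold dotProduct
  exact continuous_finset_sum _ fun i _ => continuous_const.mul (continuous_apply i)

lemma continuous_gaussDensity (S : Matrix (Fin d) (Fin d) ℝ) :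
    Continuous (gaussDensity S) := by
  unfold gaussDensity
  exact continuous_const.mul ((continuous_const.mul (continuous_quadform S⁻¹)).rexp)

theorem gauss_moment (S : Matrix (Fin d) (Fin d) ℝ) (hS : S.PosDef)
    (v : Fin d → ℝ) (N : Matrix (Fin d) (Fin d) ℝ) :
    ∫ z : Fin d → ℝ, (v ⬝ᵥ z + (1/2) * (z ⬝ᵥ N.mulVec z)) * gaussDensity S z
      = (1/2) * (N * S).trace := by
  open scoped MatrixOrder in set L := CFC.sqrt S with hLdef
  open scoped MatrixOrder in have hLL : L * L = S := CFC.sqrt_mul_sqrt_self S hS.posSemidef.nonneg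
  have hLsymm : Lᵀ = L := by
    open scoped MatrixOrder in have h := (CFC.sqrt_nonneg S).posSemidef.1
    rwa [Matrix.IsHermitian, conjTranspose_eq_transpose_of_trivial] at h
  have hdetS : 0 < S.det := hS.det_pos
  have hdetL2 : L.det * L.det = S.det := by rw [← Matrix.det_mul, hLL]
  have hdetL : L.det ≠ 0 := by
    intro h
    rw [h, zero_mul] at hdetL2
    exact hdetS.ne hdetL2
  have habs : |L.det| = Real.sqrt S.det := by
    rw [← hdetL2, Real.sqrt_mul_self_eq_abs]
  have hUnit : IsUnit L.det := isUnit_iff_ne_zero.2 hdetL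
  have hSinv : S⁻¹ = L⁻¹ * L⁻¹ := by rw [← hLL, Matrix.mul_inv_rev]
  have hQ : ∀ w : Fin d → ℝ, (L *ᵥ w) ⬝ᵥ S⁻¹ *ᵥ (L *ᵥ w) = w ⬝ᵥ w := by
    intro w
    rw [hSinv, mulVec_mulVec, mul_assoc, Matrix.nonsing_inv_mul L hUnit, mul_one,
      mulVec_dot, hLsymm, mulVec_mulVec, Matrix.mul_nonsing_inv L hUnit, one_mulVec]
  -- the density transforms into the standard product density
  have hsqrtpow : Real.sqrt ((2 * Real.pi) ^ d) = (Real.sqrt (2 * Real.pi)) ^ d := by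
    have h1 : ((Real.sqrt (2 * Real.pi)) ^ d) ^ 2 = (2 * Real.pi) ^ d := by
      rw [← pow_mul, mul_comm d 2, pow_mul, Real.sq_sqrt (by positivity)]
    rw [← h1, Real.sqrt_sq (pow_nonneg (Real.sqrt_nonneg _) d)]
  have hdens : ∀ w : Fin d → ℝ, |L.det| * gaussDensity S (L *ᵥ w) = ∏ k, phi (w k) := by
    intro w
    unfold gaussDensity
    rw [hQ]
    have hnorm : |L.det| * (Real.sqrt ((2 * Real.pi) ^ d * S.det))⁻¹
        = ((Real.sqrt (2 * Real.pi))⁻¹) ^ d := by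
      rw [Real.sqrt_mul (by positivity), habs, hsqrtpow, mul_inv]
      have hsd : Real.sqrt S.det ≠ 0 := by
        rw [← habs]; exact abs_ne_zero.2 hdetL
      field_simp
      rw [← mul_pow, mul_one_div_cancel (Real.sqrt_pos.2 (by positivity)).ne', one_pow]
    have hw : w ⬝ᵥ w = ∑ k, w k ^ 2 := by
      unfold dotProduct; exact Finset.sum_congr rfl fun k _ => (sq (w k)).symm
    rw [← mul_assoc, hnorm, hw, Finset.mul_sum, Real.exp_sum,
      show ((Real.sqrt (2 * Real.pi))⁻¹) ^ d = ∏ _k : Fin d, (Real.sqrt (2 * Real.pi))⁻¹ from by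
        rw [Finset.prod_const, Finset.card_univ, Fintype.card_fin],
      ← Finset.prod_mul_distrib]
    rfl
  -- change of variables
  set f : (Fin d → ℝ) → ℝ :=
    fun z => (v ⬝ᵥ z + (1/2) * (z ⬝ᵥ N.mulVec z)) * gaussDensity S z with hfdef
  have hfc : Continuous f :=
    ((continuous_dot v).add (continuous_const.mul (continuous_quadform N))).mul
      (continuous_gaussDensity S)
  have hmap := Real.map_matrix_volume_pi_eq_smul_volume_pi (M := L) hdetL
  have hcov : ∫ w : Fin d → ℝ, f (L *ᵥ w) = |L.det|⁻¹ * ∫ z, f z := by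
    have h1 : ∫ w : Fin d → ℝ, f (L *ᵥ w) = ∫ w : Fin d → ℝ, f ((Matrix.toLin' L) w) := by
      simp only [Matrix.toLin'_apply]
    rw [h1, ← integral_map (by
        exact (LinearMap.continuous_of_finiteDimensional _).measurable.aemeasurable)
      (hfc.aestronglyMeasurable), hmap, integral_smul_measure,
      ENNReal.toReal_ofReal (abs_nonneg _), abs_inv, smul_eq_mul]
  have hcov2 : ∫ z, f z = |L.det| * ∫ w : Fin d → ℝ, f (L *ᵥ w) := by
    rw [hcov, ← mul_assoc, mul_inv_cancel₀ (abs_ne_zero.2 hdetL), one_mul]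
  rw [hcov2]
  rw [← integral_const_mul]
  have hpt : ∀ w : Fin d → ℝ, |L.det| * f (L *ᵥ w)
      = ((L *ᵥ v) ⬝ᵥ w + (1/2) * (w ⬝ᵥ (L * N * L).mulVec w)) * ∏ k, phi (w k) := by
    intro w
    have hl : v ⬝ᵥ (L *ᵥ w) = (L *ᵥ v) ⬝ᵥ w := by
      rw [mulVec_dot, hLsymm, dotProduct_comm, mulVec_dot, hLsymm, dotProduct_comm]
    have hq : (L *ᵥ w) ⬝ᵥ N *ᵥ (L *ᵥ w) = w ⬝ᵥ (L * N * L) *ᵥ w := by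
      rw [mulVec_mulVec, mulVec_dot, hLsymm, mulVec_mulVec, ← mul_assoc]
    rw [hfdef]
    simp only
    rw [hl, hq, ← hdens w]
    ring
  rw [show (∫ w : Fin d → ℝ, |L.det| * f (L *ᵥ w))
      = ∫ w : Fin d → ℝ, ((L *ᵥ v) ⬝ᵥ w + (1/2) * (w ⬝ᵥ (L * N * L).mulVec w)) * ∏ k, phi (w k)
    from by congr 1; funext w; exact hpt w]
  rw [integral_linear_quadratic]
  rw [show L * N * L = L * (N * L) from mul_assoc L N L,
    Matrix.trace_mul_comm L (N * L), mul_assoc, hLL]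

end GaussAux

open GaussAux

/-- Exact consistency on quadratics: for `u(y) = c + bᵀy + ½ yᵀMy` with `M` symmetric,
`L_δ u(x) = ∫ (u(y)−u(x)) γ(x,y) dy = tr(A(x) M)` for every `δ > 0`. -/
theorem gaussian_nonlocal_exact_on_quadratics {d : ℕ}
    (A : (Fin d → ℝ) → Matrix (Fin d) (Fin d) ℝ)
    (hA : ∀ x, (A x).PosDef) (δ : ℝ) (hδ : 0 < δ)
    (c : ℝ) (b : Fin d → ℝ) (M : Matrix (Fin d) (Fin d) ℝ) (hM : M.IsSymm)
    (u : (Fin d → ℝ) → ℝ)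
    (hu : ∀ y, u y = c + b ⬝ᵥ y + (1 / 2) * (y ⬝ᵥ M.mulVec y))
    (x : Fin d → ℝ) :
    ∫ y : Fin d → ℝ, (u y - u x) * gaussKernel A δ x y = (A x * M).trace := by
  have hδ2 : (0:ℝ) < δ ^ 2 := by positivity
  set S : Matrix (Fin d) (Fin d) ℝ := δ ^ 2 • A x with hSdef
  have hS : S.PosDef := by
    refine ⟨?_, ?_⟩
    · show Sᴴ = S
      rw [hSdef, Matrix.conjTranspose_smul, (hA x).1.eq, star_trivial]
    · intro y hy
      exact ((hA x).smul hδ2).2 hy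
  have hMt : Mᵀ = M := hM
  -- quadratic identity
  have hq : ∀ y, u y - u x
      = (b + M *ᵥ x) ⬝ᵥ (y - x) + (1/2) * ((y - x) ⬝ᵥ M *ᵥ (y - x)) := by
    intro y
    have h1 : (M *ᵥ x) ⬝ᵥ y = x ⬝ᵥ M *ᵥ y := by rw [mulVec_dot, hMt]
    have h2 : (M *ᵥ x) ⬝ᵥ x = x ⬝ᵥ M *ᵥ x := by rw [mulVec_dot, hMt]
    have h3 : y ⬝ᵥ M *ᵥ x = x ⬝ᵥ M *ᵥ y := by
      rw [dotProduct_comm, mulVec_dot, hMt]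
    rw [hu y, hu x]
    simp only [add_dotProduct, sub_dotProduct, dotProduct_sub, mulVec_sub]
    rw [h1, h2, h3]
    ring
  set F : (Fin d → ℝ) → ℝ := fun z =>
    (2 / δ ^ 2) * (((b + M *ᵥ x) ⬝ᵥ z + (1/2) * (z ⬝ᵥ M.mulVec z)) * gaussDensity S z)
    with hFdef
  have hfun : (fun y => (u y - u x) * gaussKernel A δ x y) = fun y => F (y - x) := by
    funext y
    rw [hq y, gaussKernel, hFdef]
    ring
  rw [hfun, integral_sub_right_eq_self F x, hFdef, integral_const_mul,
    gauss_moment S hS (b + M *ᵥ x) M]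
  rw [hSdef, mul_smul_comm, Matrix.trace_smul, smul_eq_mul, Matrix.trace_mul_comm M (A x)]
  field_simp
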